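/- Let p be an odd prime and k ∈ ℤ_{>0}. Then S(p^k, −p^k) consists precisely of the following tuples (B₁, C₁, B₂, C₂), where in every case C₁ is the unique integer determined by p^kC₂ + 4B₁B₂ − C₁p^k = 0: (1) (0, C₂, 0, C₂) with 0 ≤ −C₂ < 4p^k, C₂ ≡ −1 (mod 4), gcd(C₂,p) = 1; (2) (0, C₂, B₂, C₂) with 0 < −B₂ < p^k, 0 ≤ −C₂ < 4p^k, C₂ ≡ −1 (mod 4), gcd(C₂,p) = 1; (3) (B₁, C₂, 0, C₂) with 0 < B₁ < p^k, 0 ≤ −C₂ < 4p^k, C₂ ≡ −1 (mod 4), gcd(C₂,p) = 1; (4) (b₁p^i, C₂ + 4b₁b₂, b₂p^j, C₂) with 0 < i < k, 0 < j < k, i + j = k, 0 < b₁ < p^{k−i}, gcd(b₁,p) = 1, 0 < −b₂ < p^{k−j}, gcd(b₂,p) = 1, 0 ≤ −C₂ < 4p^k, C₂ ≡ −1 (mod 4), gcd(C₂,p) = 1, and C₂ + 4b₁b₂ ≢ 0 (mod p); (5) (b₁p^i, C₂ + 4b₁b₂p^{i+j−k}, b₂p^j, C₂) with 0 < i < k,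 0 < j < k, i + j > k, 0 < b₁ < p^{k−i}, gcd(b₁,p) = 1, 0 < −b₂ < p^{k−j}, gcd(b₂,p) = 1, 0 ≤ −C₂ < 4p^k, C₂ ≡ −1 (mod 4), gcd(C₂,p) = 1. -/

import Mathlib

/-- The set `S(A₁,A₂)` of normalized tuples `(B₁,C₁,B₂,C₂)` satisfying
`A₁C₂ + 4B₁B₂ + C₁A₂ = 0`, the gcd conditions, `Cᵢ ≡ -1 (mod 4)` and the
normalization inequalities. -/
def PlSet (A₁ A₂ : ℤ) : Set (ℤ × ℤ × ℤ × ℤ) :=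
  {v | A₁ * v.2.2.2 + 4 * v.1 * v.2.2.1 + v.2.1 * A₂ = 0 ∧
    Int.gcd A₁ (Int.gcd v.1 v.2.1) = 1 ∧
    Int.gcd A₂ (Int.gcd v.2.2.1 v.2.2.2) = 1 ∧
    v.2.1 ≡ -1 [ZMOD 4] ∧ v.2.2.2 ≡ -1 [ZMOD 4] ∧
    0 ≤ (v.1 : ℚ) / (A₁ : ℚ) ∧ (v.1 : ℚ) / (A₁ : ℚ) < 1 ∧
    0 ≤ (v.2.2.1 : ℚ) / (A₂ : ℚ) ∧ (v.2.2.1 : ℚ) / (A₂ : ℚ) < 1 ∧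
    0 ≤ (v.2.2.2 : ℚ) / (4 * (A₂ : ℚ)) ∧ (v.2.2.2 : ℚ) / (4 * (A₂ : ℚ)) < 1}

lemma aux_pos {A x : ℤ} (hA : 0 < A) :
    (0 ≤ (x:ℚ)/(A:ℚ) ∧ (x:ℚ)/(A:ℚ) < 1) ↔ (0 ≤ x ∧ x < A) := by
  have hA' : (0:ℚ) < (A:ℚ) := by exact_mod_cast hA
  rw [div_lt_one hA', le_div_iff₀ hA', zero_mul]
  exact ⟨fun h => ⟨by exact_mod_cast h.1, by exact_mod_cast h.2⟩,
    fun h => ⟨by exact_mod_cast h.1, by exact_mod_cast h.2⟩⟩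

lemma aux_neg {A x : ℤ} (hA : 0 < A) :
    (0 ≤ (x:ℚ)/((-A : ℤ):ℚ) ∧ (x:ℚ)/((-A : ℤ):ℚ) < 1) ↔ (-A < x ∧ x ≤ 0) := by
  have e : (x:ℚ)/((-A : ℤ):ℚ) = ((-x : ℤ):ℚ)/((A : ℤ):ℚ) := by
    push_cast
    rw [div_neg, neg_div]
  rw [e, aux_pos hA]
  omega

lemma aux_neg4 {A x : ℤ} (hA : 0 < A) :
    (0 ≤ (x:ℚ)/(4 * ((-A : ℤ):ℚ)) ∧ (x:ℚ)/(4 * ((-A : ℤ):ℚ)) < 1) ↔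
      (-(4*A) < x ∧ x ≤ 0) := by
  have e : (4:ℚ) * ((-A : ℤ):ℚ) = ((-(4*A) : ℤ):ℚ) := by push_cast; ring
  rw [e, aux_neg (by positivity : (0:ℤ) < 4*A)]

lemma gcd_pow_left {p : ℕ} (hp : p.Prime) {k : ℕ} (hk : 0 < k) (m : ℤ) :
    Int.gcd ((p:ℤ)^k) m = 1 ↔ ¬ (p:ℤ) ∣ m := by
  rw [← Int.isCoprime_iff_gcd_eq_one, IsCoprime.pow_left_iff hk,
    (Nat.prime_iff_prime_int.mp hp).coprime_iff_not_dvd]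

lemma gcd_right_prime {p : ℕ} (hp : p.Prime) (m : ℤ) :
    Int.gcd m (p:ℤ) = 1 ↔ ¬ (p:ℤ) ∣ m := by
  rw [Int.gcd_comm, ← Int.isCoprime_iff_gcd_eq_one,
    (Nat.prime_iff_prime_int.mp hp).coprime_iff_not_dvd]

lemma dvd_gcd_iff' {q a b : ℤ} : q ∣ (Int.gcd a b : ℤ) ↔ q ∣ a ∧ q ∣ b :=
  ⟨fun h => ⟨h.trans (Int.gcd_dvd_left _ _), h.trans (Int.gcd_dvd_right _ _)⟩,
    fun h => Int.dvd_coe_gcd h.1 h.2⟩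

lemma exists_unit_pow {p : ℕ} (hp : p.Prime) {n : ℤ} (hn : n ≠ 0) :
    ∃ (i : ℕ) (m : ℤ), n = m * (p:ℤ)^i ∧ ¬ (p:ℤ) ∣ m := by
  obtain ⟨i, m0, hm0, habs⟩ :=
    Nat.exists_eq_pow_mul_and_not_dvd (Int.natAbs_ne_zero.mpr hn) p hp.ne_one
  have hs : n.sign = 1 ∨ n.sign = -1 := by
    rcases lt_trichotomy n 0 with h|h|h
    · right; exact Int.sign_eq_neg_one_iff_neg.mpr h
    · exact absurd h hn
    · left; exact Int.sign_eq_one_iff_pos.mpr h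
  refine ⟨i, n.sign * m0, ?_, ?_⟩
  · have h1 := Int.sign_mul_natAbs n
    rw [habs] at h1
    push_cast at h1
    linear_combination -h1
  · intro h
    have hm0' : ¬ (p:ℤ) ∣ (m0:ℤ) := by exact_mod_cast hm0
    rcases hs with hs|hs <;> rw [hs] at h
    · simpa using hm0' (by simpa using h)
    · apply hm0'
      have : (p:ℤ) ∣ -(m0:ℤ) := by simpa using h
      simpa using this.neg_right

lemma mem_aux {p : ℕ} (hp : p.Prime) {k : ℕ} (hk : 0 < k)
    {B₁ C₁ B₂ C₂ : ℤ}
    (hE : (p:ℤ)^k * C₂ + 4*B₁*B₂ - C₁*(p:ℤ)^k = 0)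
    (hg1 : ¬((p:ℤ) ∣ B₁ ∧ (p:ℤ) ∣ C₁))
    (hg2 : ¬((p:ℤ) ∣ B₂ ∧ (p:ℤ) ∣ C₂))
    (hM1 : C₁ ≡ -1 [ZMOD 4]) (hM2 : C₂ ≡ -1 [ZMOD 4])
    (hB1 : 0 ≤ B₁) (hB1' : B₁ < (p:ℤ)^k)
    (hB2 : -(p:ℤ)^k < B₂) (hB2' : B₂ ≤ 0)
    (hC2 : -(4*(p:ℤ)^k) < C₂) (hC2' : C₂ ≤ 0) :
    (B₁, C₁, B₂, C₂) ∈ PlSet ((p:ℤ)^k) (-(p:ℤ)^k) := by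
  have hp0 : (0:ℤ) < (p:ℤ) := by exact_mod_cast hp.pos
  have hP : (0:ℤ) < (p:ℤ)^k := by positivity
  simp only [PlSet, Set.mem_setOf_eq]
  refine ⟨by linear_combination hE, ?_, ?_, hM1, hM2,
    ((aux_pos hP).mpr ⟨hB1, hB1'⟩).1, ((aux_pos hP).mpr ⟨hB1, hB1'⟩).2,
    ((aux_neg hP).mpr ⟨hB2, hB2'⟩).1, ((aux_neg hP).mpr ⟨hB2, hB2'⟩).2,
    ((aux_neg4 hP).mpr ⟨hC2, hC2'⟩).1, ((aux_neg4 hP).mpr ⟨hC2, hC2'⟩).2⟩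
  · rw [gcd_pow_left hp hk, dvd_gcd_iff']; exact hg1
  · rw [Int.neg_gcd, gcd_pow_left hp hk, dvd_gcd_iff']; exact hg2

/-- Explicit description of `S(p^k, -p^k)` for an odd prime `p` and `k > 0`. -/
theorem plset_equal_prime_power_description (p : ℕ) (hp : p.Prime) (hp2 : p ≠ 2)
    (k : ℕ) (hk : 0 < k) :
    ∀ B₁ C₁ B₂ C₂ : ℤ,
      (B₁, C₁, B₂, C₂) ∈ PlSet ((p : ℤ) ^ k) (-(p : ℤ) ^ k) ↔
        ((p : ℤ) ^ k * C₂ + 4 * B₁ * B₂ - C₁ * (p : ℤ) ^ k = 0 ∧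
          ((B₁ = 0 ∧ B₂ = 0 ∧ C₁ = C₂ ∧
              0 ≤ -C₂ ∧ -C₂ < 4 * (p : ℤ) ^ k ∧ C₂ ≡ -1 [ZMOD 4] ∧ Int.gcd C₂ p = 1) ∨
           (B₁ = 0 ∧ C₁ = C₂ ∧ 0 < -B₂ ∧ -B₂ < (p : ℤ) ^ k ∧
              0 ≤ -C₂ ∧ -C₂ < 4 * (p : ℤ) ^ k ∧ C₂ ≡ -1 [ZMOD 4] ∧ Int.gcd C₂ p = 1) ∨
           (B₂ = 0 ∧ C₁ = C₂ ∧ 0 < B₁ ∧ B₁ < (p : ℤ) ^ k ∧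
              0 ≤ -C₂ ∧ -C₂ < 4 * (p : ℤ) ^ k ∧ C₂ ≡ -1 [ZMOD 4] ∧ Int.gcd C₂ p = 1) ∨
           (∃ i j : ℕ, ∃ b₁ b₂ : ℤ, 0 < i ∧ i < k ∧ 0 < j ∧ j < k ∧ i + j = k ∧
              B₁ = b₁ * (p : ℤ) ^ i ∧ B₂ = b₂ * (p : ℤ) ^ j ∧ C₁ = C₂ + 4 * b₁ * b₂ ∧
              0 < b₁ ∧ b₁ < (p : ℤ) ^ (k - i) ∧ Int.gcd b₁ p = 1 ∧
              0 < -b₂ ∧ -b₂ < (p : ℤ) ^ (k - j) ∧ Int.gcd b₂ p = 1 ∧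
              0 ≤ -C₂ ∧ -C₂ < 4 * (p : ℤ) ^ k ∧ C₂ ≡ -1 [ZMOD 4] ∧ Int.gcd C₂ p = 1 ∧
              ¬ ((p : ℤ) ∣ (C₂ + 4 * b₁ * b₂))) ∨
           (∃ i j : ℕ, ∃ b₁ b₂ : ℤ, 0 < i ∧ i < k ∧ 0 < j ∧ j < k ∧ k < i + j ∧
              B₁ = b₁ * (p : ℤ) ^ i ∧ B₂ = b₂ * (p : ℤ) ^ j ∧
              C₁ = C₂ + 4 * b₁ * b₂ * (p : ℤ) ^ (i + j - k) ∧
              0 < b₁ ∧ b₁ < (p : ℤ) ^ (k - i) ∧ Int.gcd b₁ p = 1 ∧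
              0 < -b₂ ∧ -b₂ < (p : ℤ) ^ (k - j) ∧ Int.gcd b₂ p = 1 ∧
              0 ≤ -C₂ ∧ -C₂ < 4 * (p : ℤ) ^ k ∧ C₂ ≡ -1 [ZMOD 4] ∧
              Int.gcd C₂ p = 1))) := by
  intro B₁ C₁ B₂ C₂
  have hp0 : (0:ℤ) < (p:ℤ) := by exact_mod_cast hp.pos
  have hp1 : (1:ℤ) < (p:ℤ) := by exact_mod_cast hp.one_lt
  have hpZ : Prime (p:ℤ) := Nat.prime_iff_prime_int.mp hp
  have hP : (0:ℤ) < (p:ℤ)^k := by positivity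
  have hp4 : ¬ (p:ℤ) ∣ 4 := by
    intro h
    have h2 : (p:ℤ) ∣ 2 := hpZ.dvd_of_dvd_pow (n := 2) (by norm_num; exact h)
    have h2' : p ∣ 2 := by exact_mod_cast h2
    exact hp2 ((Nat.prime_dvd_prime_iff_eq hp Nat.prime_two).mp h2')
  constructor
  · intro hmem
    simp only [PlSet, Set.mem_setOf_eq] at hmem
    obtain ⟨hE, hG1, hG2, hM1, hM2, h1a, h1b, h2a, h2b, h3a, h3b⟩ := hmem
    rw [gcd_pow_left hp hk, dvd_gcd_iff'] at hG1
    rw [Int.neg_gcd, gcd_pow_left hp hk, dvd_gcd_iff'] at hG2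
    obtain ⟨hB₁0, hB₁P⟩ := (aux_pos hP).mp ⟨h1a, h1b⟩
    obtain ⟨hB₂P, hB₂0⟩ := (aux_neg hP).mp ⟨h2a, h2b⟩
    obtain ⟨hC₂P, hC₂0⟩ := (aux_neg4 hP).mp ⟨h3a, h3b⟩
    have hE' : (p:ℤ)^k * C₂ + 4*B₁*B₂ - C₁*(p:ℤ)^k = 0 := by linear_combination hE
    refine ⟨by linear_combination hE', ?_⟩
    by_cases hB1 : B₁ = 0
    · subst hB1
      by_cases hB2 : B₂ = 0
      · subst hB2
        have hCC : C₁ = C₂ := by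
          have h0 : (C₂ - C₁) * (p:ℤ)^k = 0 := by linear_combination hE'
          rcases mul_eq_zero.mp h0 with h|h
          · linarith
          · exact absurd h hP.ne'
        have hpC₂ : ¬ (p:ℤ) ∣ C₂ := fun h => hG2 ⟨dvd_zero _, h⟩
        exact Or.inl ⟨rfl, rfl, hCC, by linarith, by linarith, hM2,
          (gcd_right_prime hp C₂).mpr hpC₂⟩
      · have hCC : C₁ = C₂ := by
          have h0 : (C₂ - C₁) * (p:ℤ)^k = 0 := by linear_combination hE'
          rcases mul_eq_zero.mp h0 with h|h
          · linarith
          · exact absurd h hP.ne'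
        have hpC₂ : ¬ (p:ℤ) ∣ C₂ := fun h => hG1 ⟨dvd_zero _, hCC ▸ h⟩
        have hB₂neg : B₂ < 0 := lt_of_le_of_ne hB₂0 hB2
        exact Or.inr (Or.inl ⟨rfl, hCC, by linarith, by linarith, by linarith,
          by linarith, hM2, (gcd_right_prime hp C₂).mpr hpC₂⟩)
    · by_cases hB2 : B₂ = 0
      · subst hB2
        have hCC : C₁ = C₂ := by
          have h0 : (C₂ - C₁) * (p:ℤ)^k = 0 := by linear_combination hE'
          rcases mul_eq_zero.mp h0 with h|h
          · linarith
          · exact absurd h hP.ne'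
        have hpC₂ : ¬ (p:ℤ) ∣ C₂ := fun h => hG2 ⟨dvd_zero _, h⟩
        have hB₁pos : 0 < B₁ := lt_of_le_of_ne hB₁0 (Ne.symm hB1)
        exact Or.inr (Or.inr (Or.inl ⟨rfl, hCC, hB₁pos, hB₁P, by linarith, by linarith,
          hM2, (gcd_right_prime hp C₂).mpr hpC₂⟩))
      · -- both nonzero
        obtain ⟨i, b₁, hB1e, hb1p⟩ := exists_unit_pow hp hB1
        obtain ⟨j, b₂, hB2e, hb2p⟩ := exists_unit_pow hp hB2
        subst hB1e; subst hB2e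
        have hpi : (0:ℤ) < (p:ℤ)^i := by positivity
        have hpj : (0:ℤ) < (p:ℤ)^j := by positivity
        have hb1pos : 0 < b₁ := by
          rcases lt_trichotomy b₁ 0 with h|h|h
          · nlinarith
          · exact absurd (by rw [h, zero_mul]) hB1
          · exact h
        have hb2neg : b₂ < 0 := by
          rcases lt_trichotomy b₂ 0 with h|h|h
          · exact h
          · exact absurd (by rw [h, zero_mul]) hB2
          · nlinarith
        have hik : i < k := by
          have h1 : (p:ℤ)^i ≤ b₁ * (p:ℤ)^i := by nlinarith
          exact (pow_lt_pow_iff_right₀ hp1).mp (lt_of_le_of_lt h1 hB₁P)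
        have hjk : j < k := by
          have h1 : (p:ℤ)^j ≤ (-b₂) * (p:ℤ)^j := by nlinarith
          have h2 : (-b₂) * (p:ℤ)^j < (p:ℤ)^k := by linarith
          exact (pow_lt_pow_iff_right₀ hp1).mp (lt_of_le_of_lt h1 h2)
        have hb1lt : b₁ < (p:ℤ)^(k-i) := by
          have h1 : b₁ * (p:ℤ)^i < (p:ℤ)^(k-i) * (p:ℤ)^i := by
            rw [← pow_add, Nat.sub_add_cancel hik.le]; exact hB₁P
          exact lt_of_mul_lt_mul_right h1 hpi.le
        have hb2lt : -b₂ < (p:ℤ)^(k-j) := by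
          have h1 : (-b₂) * (p:ℤ)^j < (p:ℤ)^(k-j) * (p:ℤ)^j := by
            rw [← pow_add, Nat.sub_add_cancel hjk.le]; linarith
          exact lt_of_mul_lt_mul_right h1 hpj.le
        have hEe : 4*b₁*b₂*(p:ℤ)^(i+j) = (C₁ - C₂)*(p:ℤ)^k := by
          rw [pow_add]; linear_combination hE'
        have hkij : k ≤ i + j := by
          by_contra hlt
          push_neg at hlt
          have hpij : (0:ℤ) < (p:ℤ)^(i+j) := by positivity
          have h4 : 4*b₁*b₂ = (C₁ - C₂)*(p:ℤ)^(k-(i+j)) := by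
            apply mul_right_cancel₀ hpij.ne'
            have hQ : (p:ℤ)^(k-(i+j)) * (p:ℤ)^(i+j) = (p:ℤ)^k := by
              rw [← pow_add]; congr 1; omega
            calc 4*b₁*b₂*(p:ℤ)^(i+j) = (C₁-C₂)*(p:ℤ)^k := hEe
              _ = (C₁ - C₂)*(p:ℤ)^(k-(i+j)) * (p:ℤ)^(i+j) := by rw [mul_assoc, hQ]
          have hd : (p:ℤ) ∣ 4*b₁*b₂ := by
            obtain ⟨e, he⟩ : ∃ e, k - (i+j) = e + 1 := ⟨k-(i+j)-1, by omega⟩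
            rw [h4, he, pow_succ]
            exact ⟨(C₁ - C₂)*(p:ℤ)^e, by ring⟩
          rcases hpZ.dvd_mul.mp hd with h|h
          · rcases hpZ.dvd_mul.mp h with h|h
            · exact hp4 h
            · exact hb1p h
          · exact hb2p h
        have hi0 : 0 < i := by omega
        have hj0 : 0 < j := by omega
        have hpC₂ : ¬ (p:ℤ) ∣ C₂ := by
          intro h
          exact hG2 ⟨dvd_mul_of_dvd_right (dvd_pow_self _ hj0.ne') b₂, h⟩
        by_cases hijk : i + j = k
        · have hC₁ : C₁ = C₂ + 4*b₁*b₂ := by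
            have h0 : (C₁ - C₂ - 4*b₁*b₂) * (p:ℤ)^k = 0 := by
              rw [hijk] at hEe; linear_combination -hEe
            rcases mul_eq_zero.mp h0 with h|h
            · linarith
            · exact absurd h hP.ne'
          have hpC₁ : ¬ (p:ℤ) ∣ (C₂ + 4*b₁*b₂) := by
            intro h
            exact hG1 ⟨dvd_mul_of_dvd_right (dvd_pow_self _ hi0.ne') b₁, hC₁ ▸ h⟩
          exact Or.inr (Or.inr (Or.inr (Or.inl ⟨i, j, b₁, b₂, hi0, hik, hj0, hjk, hijk,
            rfl, rfl, hC₁, hb1pos, hb1lt, (gcd_right_prime hp b₁).mpr hb1p,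
            by linarith, hb2lt, (gcd_right_prime hp b₂).mpr hb2p,
            by linarith, by linarith, hM2, (gcd_right_prime hp C₂).mpr hpC₂, hpC₁⟩)))
        · have hklt : k < i + j := lt_of_le_of_ne hkij (fun h => hijk h.symm)
          have hC₁ : C₁ = C₂ + 4*b₁*b₂*(p:ℤ)^(i+j-k) := by
            have hsplit : (p:ℤ)^(i+j) = (p:ℤ)^(i+j-k) * (p:ℤ)^k := by
              rw [← pow_add]; congr 1; omega
            have h0 : (C₁ - C₂ - 4*b₁*b₂*(p:ℤ)^(i+j-k)) * (p:ℤ)^k = 0 := by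
              rw [hsplit] at hEe; linear_combination -hEe
            rcases mul_eq_zero.mp h0 with h|h
            · linarith
            · exact absurd h hP.ne'
          exact Or.inr (Or.inr (Or.inr (Or.inr ⟨i, j, b₁, b₂, hi0, hik, hj0, hjk, hklt,
            rfl, rfl, hC₁, hb1pos, hb1lt, (gcd_right_prime hp b₁).mpr hb1p,
            by linarith, hb2lt, (gcd_right_prime hp b₂).mpr hb2p,
            by linarith, by linarith, hM2, (gcd_right_prime hp C₂).mpr hpC₂⟩)))
  · rintro ⟨hE, h|h|h|h|h⟩
    · obtain ⟨hB1, hB2, hCC, hC2a, hC2b, hM2, hgC⟩ := h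
      subst hB1; subst hB2; subst hCC
      have hpC₂ := (gcd_right_prime hp _).mp hgC
      exact mem_aux hp hk hE (fun h => hpC₂ h.2) (fun h => hpC₂ h.2) hM2 hM2
        le_rfl hP (by linarith) le_rfl (by linarith) (by linarith)
    · obtain ⟨hB1, hCC, hb2a, hb2b, hC2a, hC2b, hM2, hgC⟩ := h
      subst hB1; subst hCC
      have hpC₂ := (gcd_right_prime hp _).mp hgC
      exact mem_aux hp hk hE (fun h => hpC₂ h.2) (fun h => hpC₂ h.2) hM2 hM2
        le_rfl hP (by linarith) (by linarith) (by linarith) (by linarith)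
    · obtain ⟨hB2, hCC, hb1a, hb1b, hC2a, hC2b, hM2, hgC⟩ := h
      subst hB2; subst hCC
      have hpC₂ := (gcd_right_prime hp _).mp hgC
      exact mem_aux hp hk hE (fun h => hpC₂ h.2) (fun h => hpC₂ h.2) hM2 hM2
        (by linarith) hb1b (by linarith) le_rfl (by linarith) (by linarith)
    · obtain ⟨i, j, b₁, b₂, hi0, hik, hj0, hjk, hijk, hB1e, hB2e, hC1e, hb1, hb1lt,
        hg1, hb2, hb2lt, hg2, hC2a, hC2b, hM2, hgC, hnd⟩ := h
      subst hB1e; subst hB2e; subst hC1e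
      have hpC₂ := (gcd_right_prime hp _).mp hgC
      have hpi : (0:ℤ) < (p:ℤ)^i := by positivity
      have hpj : (0:ℤ) < (p:ℤ)^j := by positivity
      have hM1 : C₂ + 4*b₁*b₂ ≡ -1 [ZMOD 4] :=
        (Int.modEq_iff_dvd.mpr ⟨-(b₁*b₂), by ring⟩).trans hM2
      have hb1' : b₁ * (p:ℤ)^i < (p:ℤ)^k := by
        have h1 : b₁ * (p:ℤ)^i < (p:ℤ)^(k-i) * (p:ℤ)^i :=
          mul_lt_mul_of_pos_right hb1lt hpi
        rwa [← pow_add, Nat.sub_add_cancel hik.le] at h1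
      have hb2' : -(p:ℤ)^k < b₂ * (p:ℤ)^j := by
        have h1 : (-b₂) * (p:ℤ)^j < (p:ℤ)^(k-j) * (p:ℤ)^j :=
          mul_lt_mul_of_pos_right hb2lt hpj
        rw [← pow_add, Nat.sub_add_cancel hjk.le] at h1
        linarith
      exact mem_aux hp hk hE (fun h => hnd h.2) (fun h => hpC₂ h.2) hM1 hM2
        (le_of_lt (mul_pos hb1 hpi)) hb1' hb2'
        (le_of_lt (mul_neg_of_neg_of_pos (by linarith) hpj)) (by linarith) (by linarith)
    · obtain ⟨i, j, b₁, b₂, hi0, hik, hj0, hjk, hklt, hB1e, hB2e, hC1e, hb1, hb1lt,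
        hg1, hb2, hb2lt, hg2, hC2a, hC2b, hM2, hgC⟩ := h
      subst hB1e; subst hB2e; subst hC1e
      have hpC₂ := (gcd_right_prime hp _).mp hgC
      have hpi : (0:ℤ) < (p:ℤ)^i := by positivity
      have hpj : (0:ℤ) < (p:ℤ)^j := by positivity
      have hM1 : C₂ + 4*b₁*b₂*(p:ℤ)^(i+j-k) ≡ -1 [ZMOD 4] :=
        (Int.modEq_iff_dvd.mpr ⟨-(b₁*b₂*(p:ℤ)^(i+j-k)), by ring⟩).trans hM2
      have hpC₁ : ¬ (p:ℤ) ∣ (C₂ + 4*b₁*b₂*(p:ℤ)^(i+j-k)) := by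
        intro h
        have hx : (p:ℤ) ∣ 4*b₁*b₂*(p:ℤ)^(i+j-k) :=
          (dvd_pow_self (p:ℤ) (by omega : i+j-k ≠ 0)).mul_left _
        have : (p:ℤ) ∣ C₂ := by
          have := h.sub hx
          simpa using this
        exact hpC₂ this
      have hb1' : b₁ * (p:ℤ)^i < (p:ℤ)^k := by
        have h1 : b₁ * (p:ℤ)^i < (p:ℤ)^(k-i) * (p:ℤ)^i :=
          mul_lt_mul_of_pos_right hb1lt hpi
        rwa [← pow_add, Nat.sub_add_cancel hik.le] at h1
      have hb2' : -(p:ℤ)^k < b₂ * (p:ℤ)^j := by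
        have h1 : (-b₂) * (p:ℤ)^j < (p:ℤ)^(k-j) * (p:ℤ)^j :=
          mul_lt_mul_of_pos_right hb2lt hpj
        rw [← pow_add, Nat.sub_add_cancel hjk.le] at h1
        linarith
      exact mem_aux hp hk hE (fun h => hpC₁ h.2) (fun h => hpC₂ h.2) hM1 hM2
        (le_of_lt (mul_pos hb1 hpi)) hb1' hb2'
        (le_of_lt (mul_neg_of_neg_of_pos (by linarith) hpj)) (by linarith) (by linarith)
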